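/- arXiv:2003.00578 — 6 statements merged into one kernel-verified Lean document; each statement's English description precedes it below -/
import Mathlib

section
/- Let R be a type, let G := (Fin k → ZMod 2) be the space of k-bit strings serving as both message and ciphertext space, and let Enc : R → G → G and Dec : G → G satisfy Dec (Enc r m) = m for all r : R and m : G (perfect correctness). Define T1 : R × G × G → R × G × G by T1 (r, m, y) = (r, m, y + Enc r m) (type-1 encryption), SW (r, m, c) = (r, c, m) (register swap), and T2 (r, c, z) = (r, c, z + Dec c) (type-1 decryption). Then for all r : R and m : G, (T2 ∘ SW ∘ T1) (r, m, 0) = (r, Enc r m, 0). -/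
/-- Type-1 encryption operator: `(r, m, y) ↦ (r, m, y ⊕ Enc r m)`. -/
def T1 {R : Type*} {k : ℕ} (Enc : R → (Fin k → ZMod 2) → (Fin k → ZMod 2))
    (p : R × (Fin k → ZMod 2) × (Fin k → ZMod 2)) :
    R × (Fin k → ZMod 2) × (Fin k → ZMod 2) :=
  (p.1, p.2.1, p.2.2 + Enc p.1 p.2.1)

/-- Register swap: `(r, m, c) ↦ (r, c, m)`. -/
def SW {R : Type*} {k : ℕ} (p : R × (Fin k → ZMod 2) × (Fin k → ZMod 2)) :
    R × (Fin k → ZMod 2) × (Fin k → ZMod 2) :=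
  (p.1, p.2.2, p.2.1)

/-- Type-1 decryption operator: `(r, c, z) ↦ (r, c, z ⊕ Dec c)`. -/
def T2 {R : Type*} {k : ℕ} (Dec : (Fin k → ZMod 2) → (Fin k → ZMod 2))
    (p : R × (Fin k → ZMod 2) × (Fin k → ZMod 2)) :
    R × (Fin k → ZMod 2) × (Fin k → ZMod 2) :=
  (p.1, p.2.1, p.2.2 + Dec p.2.1)

/-- **Correctness of the canonical type-2 encryption circuit (perfectly correct case).**
Composing type-1 encryption, a swap, and type-1 decryption maps `(r, m, 0)` to
`(r, Enc r m, 0)`. -/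
theorem type2_circuit_correct {R : Type*} {k : ℕ}
    (Enc : R → (Fin k → ZMod 2) → (Fin k → ZMod 2))
    (Dec : (Fin k → ZMod 2) → (Fin k → ZMod 2))
    (hcorr : ∀ (r : R) (m : Fin k → ZMod 2), Dec (Enc r m) = m) :
    ∀ (r : R) (m : Fin k → ZMod 2),
      (T2 Dec ∘ SW ∘ T1 Enc) (r, m, 0) = (r, Enc r m, 0) := by
  intro r m
  simp [T1, SW, T2, hcorr]
  funext i; simp [CharTwo.add_self_eq_zero]
end

section
/- Let R, M, C be finite types, let pad : M ↪ C be an injective map, let Enc : R → M → C, and suppose there exists a recovery function Rec : R → C → M such that Rec r (Enc r m) = m for all r : R and m : M (the scheme is recoverable). Then for every r : R the map Enc r is injective, and there exists a linear isometry equivalence (unitary) U : EuclideanSpace ℂ (R × C) ≃ₗᵢ EuclideanSpace ℂ (R × C) such that for all r : R and m : M, U maps the standard basis vector indexed by (r, pad m) to the standard basis vector indexed by (r, Enc r m). -/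
/-- **Type-2 encryption operator for recoverable PKE schemes.**
If there is a recovery function `Rec` with `Rec r (Enc r m) = m`, then `Enc r` is
injective for every `r` and there exists a unitary on `EuclideanSpace ℂ (R × C)`
mapping the basis state `|r, pad m⟩` to `|r, Enc r m⟩`. -/
theorem type2_operator_of_recoverable
    {R M C : Type*} [Fintype R] [Fintype M] [Fintype C]
    [DecidableEq R] [DecidableEq M] [DecidableEq C]
    (pad : M ↪ C) (Enc : R → M → C)
    (hrec : ∃ Rec : R → C → M, ∀ (r : R) (m : M), Rec r (Enc r m) = m) :
    (∀ r : R, Function.Injective (Enc r)) ∧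
    ∃ U : EuclideanSpace ℂ (R × C) ≃ₗᵢ[ℂ] EuclideanSpace ℂ (R × C),
      ∀ (r : R) (m : M),
        U (EuclideanSpace.single (r, pad m) (1 : ℂ)) =
          EuclideanSpace.single (r, Enc r m) (1 : ℂ) := by
  obtain ⟨Rec, hRec⟩ := hrec
  have hinj : ∀ r : R, Function.Injective (Enc r) := fun r =>
    Function.LeftInverse.injective (hRec r)
  refine ⟨hinj, ?_⟩
  classical
  let esub : ∀ r : R,
      {c : C // c ∈ Set.range pad} ≃ {c : C // c ∈ Set.range (Enc r)} := fun r =>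
    (Equiv.ofInjective pad pad.injective).symm.trans (Equiv.ofInjective (Enc r) (hinj r))
  let σ : Equiv.Perm (R × C) := Equiv.prodShear (Equiv.refl R)
    (fun r => (esub r).extendSubtype)
  refine ⟨LinearIsometryEquiv.piLpCongrLeft 2 ℂ ℂ σ, fun r m => ?_⟩
  have h1 : σ (r, pad m) = (r, Enc r m) := by
    have hmem : pad m ∈ Set.range pad := ⟨m, rfl⟩
    have hx : (esub r).extendSubtype (pad m) = Enc r m := by
      rw [Equiv.extendSubtype_apply_of_mem _ _ hmem]
      show ((Equiv.ofInjective (Enc r) (hinj r))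
        ((Equiv.ofInjective pad pad.injective).symm ⟨pad m, hmem⟩) : C) = Enc r m
      rw [Equiv.ofInjective_symm_apply]
      rfl
    simp [σ, Equiv.prodShear, hx]
  have := LinearIsometryEquiv.piLpCongrLeft_single (p := 2) (𝕜 := ℂ) (E := ℂ)
    σ (r, pad m) (1 : ℂ)
  rw [h1] at this
  exact this
end

section
/- Let R be a type, let G := (Fin k → ZMod 2) serve as both message and ciphertext space, and let Enc : R → G → G admit a recovery function Rec : R → G → G with Rec r (Enc r m) = m for all r, m. Define T1 (r, m, y) = (r, m, y + Enc r m) (type-1 encryption), SW (r, m, c) = (r, c, m) (register swap), and T2' (r, c, z) = (r, c, z + Rec r c) (type-1 recovery). Then for all r : R and m : G, (T2' ∘ SW ∘ T1) (r, m, 0) = (r, Enc r m, 0). -/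
/-- Type-1 recovery operator: `(r, c, z) ↦ (r, c, z ⊕ Rec r c)`. -/
def T2' {R : Type*} {k : ℕ} (Rec : R → (Fin k → ZMod 2) → (Fin k → ZMod 2))
    (p : R × (Fin k → ZMod 2) × (Fin k → ZMod 2)) :
    R × (Fin k → ZMod 2) × (Fin k → ZMod 2) :=
  (p.1, p.2.1, p.2.2 + Rec p.1 p.2.1)

/-- **Correctness of the canonical type-2 encryption circuit (recoverable case).**
Composing type-1 encryption, a swap, and type-1 recovery maps `(r, m, 0)` to
`(r, Enc r m, 0)`. -/
theorem type2_circuit_correct_recoverable {R : Type*} {k : ℕ}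
    (Enc : R → (Fin k → ZMod 2) → (Fin k → ZMod 2))
    (Rec : R → (Fin k → ZMod 2) → (Fin k → ZMod 2))
    (hrec : ∀ (r : R) (m : Fin k → ZMod 2), Rec r (Enc r m) = m) :
    ∀ (r : R) (m : Fin k → ZMod 2),
      (T2' Rec ∘ SW ∘ T1 Enc) (r, m, 0) = (r, Enc r m, 0) := by
  intro r m
  simp only [Function.comp_apply, T1, SW, T2', zero_add, hrec]
  refine Prod.ext rfl (Prod.ext rfl ?_)
  ext i
  exact CharTwo.add_self_eq_zero _
end

section
/- For n ≥ 1 and any w : Fin n → ZMod 2, let v0 m := (Real.sqrt (2 ^ n))⁻¹ and v1 m := ((-1) ^ (∑ i, m i).val) / Real.sqrt (2 ^ n) in EuclideanSpace ℂ (Fin n → ZMod 2), and let Sʷ act by (Sʷ ψ) m := ψ (m + w). Then ‖⟪v0, Sʷ v0⟫‖ ^ 2 = 1 and ‖⟪v0, Sʷ v1⟫‖ ^ 2 = 0. -/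
open scoped InnerProductSpace


lemma parity_sum_zero (n : ℕ) (hn : 1 ≤ n) :
    ∑ m : Fin n → ZMod 2, ((-1 : ℂ) ^ (∑ i, m i).val) = 0 := by
  have h2 : ∀ a : ZMod 2, a + a = 0 := by decide
  have hne : ∀ a : ZMod 2, a + 1 ≠ a := by decide
  have hflip : ∀ a : ZMod 2, ((-1 : ℂ) ^ (a + 1).val) = -((-1 : ℂ) ^ a.val) := by
    intro a; fin_cases a
    · change (-1 : ℂ) ^ 1 = -(-1 : ℂ) ^ 0; norm_num
    · change (-1 : ℂ) ^ 0 = -(-1 : ℂ) ^ 1; norm_num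
  set i₀ : Fin n := ⟨0, hn⟩
  set δ : Fin n → ZMod 2 := fun j => if j = i₀ then 1 else 0 with hδ
  have hδsum : ∑ i, δ i = 1 := by simp [hδ]
  refine Finset.sum_involution (fun m _ => m + δ) ?_ ?_ (fun _ _ => Finset.mem_univ _) ?_
  · intro m _
    have : (∑ i, (m + δ) i) = (∑ i, m i) + 1 := by
      simp [Finset.sum_add_distrib, hδsum]
    rw [this, hflip]; ring
  · intro m _ _ h
    have := congrFun h i₀
    simp only [Pi.add_apply, hδ, if_pos rfl] at this
    exact hne _ this
  · intro m _
    funext j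
    simp only [Pi.add_apply]
    rw [add_assoc, h2, add_zero]

/-- **Quantum kernel of the attack against the canonical LWE scheme for q = 2.**
Projecting the XOR-shifted challenge states onto the uniform superposition yields
probability 1 for `v0 = H|0…0⟩` and probability 0 for `v1 = H|1…1⟩`. -/
theorem lwe_attack_kernel (n : ℕ) (hn : 1 ≤ n) (w : Fin n → ZMod 2)
    (v0 v1 : EuclideanSpace ℂ (Fin n → ZMod 2))
    (hv0 : ∀ m : Fin n → ZMod 2, v0 m = (Real.sqrt (2 ^ n) : ℝ)⁻¹)
    (hv1 : ∀ m : Fin n → ZMod 2,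
      v1 m = ((-1 : ℂ) ^ (∑ i, m i).val) / (Real.sqrt (2 ^ n) : ℝ))
    (S : EuclideanSpace ℂ (Fin n → ZMod 2) → EuclideanSpace ℂ (Fin n → ZMod 2))
    (hS : ∀ (ψ : EuclideanSpace ℂ (Fin n → ZMod 2)) (m : Fin n → ZMod 2),
      S ψ m = ψ (m + w)) :
    ‖⟪v0, S v0⟫_ℂ‖ ^ 2 = 1 ∧ ‖⟪v0, S v1⟫_ℂ‖ ^ 2 = 0 := by
  have hpos : (0 : ℝ) < Real.sqrt (2 ^ n) := Real.sqrt_pos.mpr (by positivity)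
  have hsq : Real.sqrt (2 ^ n) * Real.sqrt (2 ^ n) = 2 ^ n :=
    Real.mul_self_sqrt (by positivity)
  have hcard : Fintype.card (Fin n → ZMod 2) = 2 ^ n := by simp
  constructor
  · have : ⟪v0, S v0⟫_ℂ = 1 := by
      rw [PiLp.inner_apply]
      have : ∀ m : Fin n → ZMod 2,
          (inner ℂ (v0 m) (S v0 m) : ℂ) = ((Real.sqrt (2 ^ n))⁻¹ * (Real.sqrt (2 ^ n))⁻¹ : ℝ) := by
        intro m
        rw [hS, hv0, hv0]
        simp [RCLike.inner_apply, ← Complex.ofReal_inv]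
        rw [abs_of_pos hpos]; push_cast; ring
      rw [Finset.sum_congr rfl (fun m _ => this m), Finset.sum_const]
      simp only [Finset.card_univ, hcard, nsmul_eq_mul]
      rw [← Complex.ofReal_natCast, ← Complex.ofReal_mul]
      norm_cast
      push_cast
      rw [← hsq]
      field_simp
      rw [Real.sqrt_sq hpos.le]
    rw [this]; simp
  · have : ⟪v0, S v1⟫_ℂ = 0 := by
      rw [PiLp.inner_apply]
      have step : ∀ m : Fin n → ZMod 2,
          (inner ℂ (v0 m) (S v1 m) : ℂ) =
            ((Real.sqrt (2 ^ n))⁻¹ / (Real.sqrt (2 ^ n)) : ℝ) *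
              ((-1 : ℂ) ^ (∑ i, (m + w) i).val) := by
        intro m
        rw [hS, hv0, hv1]
        simp [RCLike.inner_apply, ← Complex.ofReal_inv]
        ring
      rw [Finset.sum_congr rfl (fun m _ => step m), ← Finset.mul_sum]
      have reidx : ∑ m : Fin n → ZMod 2, ((-1 : ℂ) ^ (∑ i, (m + w) i).val)
          = ∑ m : Fin n → ZMod 2, ((-1 : ℂ) ^ (∑ i, m i).val) :=
        Fintype.sum_equiv (Equiv.addRight w) _ _ (fun m => rfl)
      rw [reidx, parity_sum_zero n hn, mul_zero]
    rw [this]; simp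
end

section
/- For n ≥ 1, let v0 : EuclideanSpace ℂ (Fin n → ZMod 2) be v0 m := (Real.sqrt (2 ^ n))⁻¹, let Sᵏ act by (Sᵏ ψ) m := ψ (m + k) for k : Fin n → ZMod 2, and let δ₀ be the standard basis vector at the all-zero string. Then for every k : ‖⟪v0, Sᵏ v0⟫‖ ^ 2 = 1 and ‖⟪v0, δ₀⟫‖ ^ 2 = (2 : ℝ) ^ (-(n : ℤ)); consequently (1/2) * 1 + (1/2) * (1 - (2 : ℝ) ^ (-(n : ℤ))) ≥ 3/4. -/
open scoped InnerProductSpace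

/-- **Quantum kernel of the attack against ROLLO-II.**
One-time-pad XOR-shifts fix the uniform superposition, which overlaps with the
all-zero basis state only with probability `2 ^ (-n)`; hence the distinguisher
wins the qIND-qCPA experiment with probability at least `3/4`. -/
theorem rollo_attack_kernel (n : ℕ) (hn : 1 ≤ n)
    (v0 : EuclideanSpace ℂ (Fin n → ZMod 2))
    (hv0 : ∀ m : Fin n → ZMod 2, v0 m = (Real.sqrt (2 ^ n) : ℝ)⁻¹)
    (S : (Fin n → ZMod 2) → EuclideanSpace ℂ (Fin n → ZMod 2) →
      EuclideanSpace ℂ (Fin n → ZMod 2))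
    (hS : ∀ (k : Fin n → ZMod 2) (ψ : EuclideanSpace ℂ (Fin n → ZMod 2))
      (m : Fin n → ZMod 2), S k ψ m = ψ (m + k))
    (δ₀ : EuclideanSpace ℂ (Fin n → ZMod 2))
    (hδ₀ : δ₀ = EuclideanSpace.single (0 : Fin n → ZMod 2) (1 : ℂ)) :
    (∀ k : Fin n → ZMod 2, ‖⟪v0, S k v0⟫_ℂ‖ ^ 2 = 1) ∧
    ‖⟪v0, δ₀⟫_ℂ‖ ^ 2 = (2 : ℝ) ^ (-(n : ℤ)) ∧
    (1 / 2 : ℝ) * 1 + (1 / 2) * (1 - (2 : ℝ) ^ (-(n : ℤ))) ≥ 3 / 4 := by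
  have hsqrt : (0:ℝ) < Real.sqrt (2 ^ n) := Real.sqrt_pos.2 (by positivity)
  have hc2 : ((Real.sqrt (2 ^ n) : ℝ)⁻¹) ^ 2 = ((2:ℝ) ^ n)⁻¹ := by
    rw [inv_pow, Real.sq_sqrt (by positivity)]
  have hcard : Fintype.card (Fin n → ZMod 2) = 2 ^ n := by simp
  have hzpow : ((2:ℝ) ^ (-(n:ℤ))) = ((2:ℝ) ^ n)⁻¹ := by
    rw [zpow_neg, zpow_natCast]
  refine ⟨?_, ?_, ?_⟩
  · intro k
    have hSv : S k v0 = v0 := by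
      ext m
      rw [hS, hv0, hv0]
    rw [hSv, PiLp.inner_apply]
    have : ∀ m : Fin n → ZMod 2, ⟪v0 m, v0 m⟫_ℂ
        = (((Real.sqrt (2 ^ n) : ℝ)⁻¹ ^ 2 : ℝ) : ℂ) := by
      intro m
      rw [hv0]
      simp [RCLike.inner_apply, ← Complex.ofReal_pow, sq, abs_of_nonneg hsqrt.le]
    rw [Finset.sum_congr rfl (fun m _ => this m), Finset.sum_const]
    simp only [Finset.card_univ, hcard, nsmul_eq_mul, hc2]
    rw [show (((2:ℕ)^n : ℕ) : ℂ) * ((((2:ℝ)^n)⁻¹ : ℝ) : ℂ) = 1 by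
      push_cast; field_simp]
    simp
  · rw [hδ₀, EuclideanSpace.inner_single_right, hv0]
    simp only [one_mul, Complex.conj_ofReal, Complex.norm_real]
    rw [hzpow, ← hc2, Real.norm_eq_abs, abs_of_nonneg (by positivity)]
  · have h1 : ((2:ℝ) ^ (-(n:ℤ))) ≤ 1/2 := by
      rw [hzpow]
      rw [inv_le_comm₀ (by positivity) (by norm_num)]
      calc (1/2 : ℝ)⁻¹ = 2 ^ 1 := by norm_num
        _ ≤ 2 ^ n := by exact pow_le_pow_right₀ (by norm_num) hn
    linarith
end

section
/- Let R, M, Y, C be finite types, let F : M → Y be injective, let pad : M ↪ C be an injective map, let EncΣ : Y → R → C, and suppose there exists Rec : R → C → Y with Rec r (EncΣ y r) = y for all y : Y and r : R (Σ is recoverable). Define the transformed encryption Enc' : M → R → C by Enc' m r := EncΣ (F m) r. Then for every r : R the map m ↦ Enc' m r is injective, and there exists a linear isometry equivalence (unitary) U : EuclideanSpace ℂ (R × C) ≃ₗᵢ EuclideanSpace ℂ (R × C) such that for all r : R and m : M, U maps the standard basis vector indexed by (r, pad m) to the standard basis vector indexed by (r, Enc' m r). -/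
/-- **The transformed scheme of Theorem 7 is (efficiently) isometric.**
If `Σ` is recoverable and `F` is injective, then the transformed encryption
`Enc' m r := EncSig (F m) r` is injective in the message for every randomness,
and admits a type-2 encryption unitary on `EuclideanSpace ℂ (R × C)`. -/
theorem transformed_scheme_isometric
    {R M Y C : Type*} [Fintype R] [Fintype M] [Fintype Y] [Fintype C]
    [DecidableEq R] [DecidableEq M] [DecidableEq Y] [DecidableEq C]
    (F : M → Y) (hF : Function.Injective F)
    (pad : M ↪ C) (EncSig : Y → R → C)
    (hrec : ∃ Rec : R → C → Y, ∀ (y : Y) (r : R), Rec r (EncSig y r) = y) :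
    (∀ r : R, Function.Injective (fun m : M => EncSig (F m) r)) ∧
    ∃ U : EuclideanSpace ℂ (R × C) ≃ₗᵢ[ℂ] EuclideanSpace ℂ (R × C),
      ∀ (r : R) (m : M),
        U (EuclideanSpace.single (r, pad m) (1 : ℂ)) =
          EuclideanSpace.single (r, EncSig (F m) r) (1 : ℂ) := by
  obtain ⟨Rec, hRec⟩ := hrec
  have hinj : ∀ r : R, Function.Injective (fun m : M => EncSig (F m) r) := by
    intro r m₁ m₂ h
    apply hF
    have := congrArg (Rec r) h
    simpa [hRec] using this
  refine ⟨hinj, ?_⟩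
  -- embeddings `pad` and `g r := Enc' · r` into `C`
  set g : R → M ↪ C := fun r => ⟨fun m => EncSig (F m) r, hinj r⟩ with hg
  -- permutation of C sending `pad m` to `g r m`
  let σ : R → Equiv.Perm C := fun r =>
    ((pad.toEquivRange.symm.trans (g r).toEquivRange).extendSubtype)
  have hσ : ∀ r m, σ r (pad m) = EncSig (F m) r := by
    intro r m
    have hm : pad m ∈ Set.range pad := ⟨m, rfl⟩
    rw [Equiv.extendSubtype_apply_of_mem _ _ hm]
    simp [Function.Embedding.toEquivRange, hg]
  let P : Equiv.Perm (R × C) := Equiv.prodShear (Equiv.refl R) σ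
  refine ⟨LinearIsometryEquiv.piLpCongrLeft 2 ℂ ℂ P, ?_⟩
  intro r m
  have := LinearIsometryEquiv.piLpCongrLeft_single (p := 2) (𝕜 := ℂ) (E := ℂ)
    P (r, pad m) (1 : ℂ)
  have hP : P (r, pad m) = (r, EncSig (F m) r) := by
    simp [P, Equiv.prodShear, hσ]
  rw [hP] at this
  simpa [EuclideanSpace.single, WithLp.equiv] using this
end
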